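/- Let E be a normed L-space and f : E → ℂ a bounded linear functional. Then the amplification f_∞ := id_L ⊗ f : L ⊗ E → L (with the L-norm on L ⊗ E and the given norm on L) is bounded, and ‖f_∞‖ = ‖f‖. -/

import Mathlib

open TensorProduct

/-- For a normed `L`-space `E` and a bounded functional `f : E → ℂ`,
the amplification `f_∞ = id_L ⊗ f : L ⊗ E → L` is bounded with `‖f_∞‖ = ‖f‖`
(stated as: `‖f‖` is the least constant `C ≥ 0` with `‖f_∞ u‖ ≤ C * ‖u‖`). -/
theorem functional_amplification_bounded
    (L E : Type*) [NormedAddCommGroup L] [NormedSpace ℂ L] [Nontrivial L]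
    [NormedAddCommGroup E] [NormedSpace ℂ E]
    (N : L ⊗[ℂ] E → ℝ)
    (hN0 : ∀ u : L ⊗[ℂ] E, N u = 0 ↔ u = 0)
    (hNadd : ∀ u v : L ⊗[ℂ] E, N (u + v) ≤ N u + N v)
    (hNsmul : ∀ (c : ℂ) (u : L ⊗[ℂ] E), N (c • u) = ‖c‖ * N u)
    (hcontr : ∀ (a : L →L[ℂ] L) (u : L ⊗[ℂ] E),
      N (LinearMap.rTensor E (a : L →ₗ[ℂ] L) u) ≤ ‖a‖ * N u)
    (hund : ∀ (ξ : L) (x : E), ‖ξ‖ = 1 → N (ξ ⊗ₜ[ℂ] x) = ‖x‖)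
    (f : E →L[ℂ] ℂ) :
    (∀ u : L ⊗[ℂ] E,
      ‖(TensorProduct.rid ℂ L) (LinearMap.lTensor L (f : E →ₗ[ℂ] ℂ) u)‖ ≤ ‖f‖ * N u) ∧
    (∀ C : ℝ, 0 ≤ C →
      (∀ u : L ⊗[ℂ] E,
        ‖(TensorProduct.rid ℂ L) (LinearMap.lTensor L (f : E →ₗ[ℂ] ℂ) u)‖ ≤ C * N u) →
      ‖f‖ ≤ C) := by
  -- a unit vector in L
  obtain ⟨ξ₀, hξ₀⟩ := exists_ne (0 : L)
  set η : L := ‖ξ₀‖⁻¹ • ξ₀ with hηdef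
  have hη : ‖η‖ = 1 := by
    rw [hηdef, norm_smul, norm_inv, norm_norm]
    exact inv_mul_cancel₀ (norm_ne_zero_iff.mpr hξ₀)
  -- N is nonnegative
  have hNnonneg : ∀ u, 0 ≤ N u := by
    intro u
    have h1 : N (-u) = N u := by
      have := hNsmul (-1) u
      simpa using this
    have h2 : N (0 : L ⊗[ℂ] E) = 0 := (hN0 0).mpr rfl
    have h3 := hNadd u (-u)
    rw [add_neg_cancel, h2, h1] at h3
    linarith
  -- the amplification as a linear map
  set A : L ⊗[ℂ] E →ₗ[ℂ] L :=
    (TensorProduct.rid ℂ L).toLinearMap ∘ₗ LinearMap.lTensor L (f : E →ₗ[ℂ] ℂ) with hAdef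
  -- "slice" maps
  set W : (L →L[ℂ] ℂ) → (L ⊗[ℂ] E →ₗ[ℂ] E) := fun φ =>
    (TensorProduct.lid ℂ E).toLinearMap ∘ₗ LinearMap.rTensor E (φ : L →ₗ[ℂ] ℂ) with hWdef
  have id1 : ∀ (φ : L →L[ℂ] ℂ) (u : L ⊗[ℂ] E),
      LinearMap.rTensor E ((φ.smulRight η : L →L[ℂ] L) : L →ₗ[ℂ] L) u = η ⊗ₜ[ℂ] (W φ u) := by
    intro φ u
    induction u using TensorProduct.induction_on with
    | zero => simp
    | tmul ξ x =>
        show (φ ξ • η) ⊗ₜ[ℂ] x = η ⊗ₜ[ℂ] (W φ (ξ ⊗ₜ[ℂ] x))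
        have : W φ (ξ ⊗ₜ[ℂ] x) = φ ξ • x := by simp [hWdef]
        rw [this, TensorProduct.smul_tmul]
    | add v w hv hw => simp only [map_add, hv, hw, TensorProduct.tmul_add]
  have id2 : ∀ (φ : L →L[ℂ] ℂ) (u : L ⊗[ℂ] E), φ (A u) = f (W φ u) := by
    intro φ u
    induction u using TensorProduct.induction_on with
    | zero => simp
    | tmul ξ x => simp [hAdef, hWdef, mul_comm]
    | add v w hv hw => simp [hv, hw]
  have key : ∀ (φ : L →L[ℂ] ℂ), ‖φ‖ ≤ 1 → ∀ u, ‖W φ u‖ ≤ N u := by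
    intro φ hφ u
    have h1 : N (η ⊗ₜ[ℂ] (W φ u)) = ‖W φ u‖ := hund η (W φ u) hη
    have h2 := hcontr (φ.smulRight η) u
    rw [id1 φ u, h1] at h2
    have h3 : ‖φ.smulRight η‖ ≤ 1 := by
      rw [ContinuousLinearMap.norm_smulRight_apply, hη, mul_one]
      exact hφ
    nlinarith [hNnonneg u]
  constructor
  · intro u
    show ‖A u‖ ≤ ‖f‖ * N u
    by_cases h : A u = 0
    · rw [h, norm_zero]
      exact mul_nonneg (norm_nonneg f) (hNnonneg u)
    · obtain ⟨φ, hφ1, hφ2⟩ := exists_dual_vector ℂ (A u) (norm_ne_zero_iff.mpr h)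
      calc ‖A u‖ = ‖φ (A u)‖ := by rw [hφ2]; simp
        _ = ‖f (W φ u)‖ := by rw [id2 φ u]
        _ ≤ ‖f‖ * ‖W φ u‖ := f.le_opNorm _
        _ ≤ ‖f‖ * N u :=
            mul_le_mul_of_nonneg_left (key φ hφ1.le u) (norm_nonneg f)
  · intro C hC hbound
    apply f.opNorm_le_bound hC
    intro x
    have hu := hbound (η ⊗ₜ[ℂ] x)
    have hA : (TensorProduct.rid ℂ L) (LinearMap.lTensor L (f : E →ₗ[ℂ] ℂ) (η ⊗ₜ[ℂ] x))
        = f x • η := by simp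
    rw [hA, norm_smul, hη, mul_one, hund η x hη] at hu
    exact hu
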